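/- If a binary operation • on a set X belongs to ZBin(X), then for all x, y in X with x ≠ y, the restriction of • to {x, y} is either a left-zero-semigroup (i.e., x • y = x and y • x = y) or a right-zero-semigroup (i.e., x • y = y and y • x = x). -/
import Mathlib


/-- A binary operation `•` is in the center `ZBin(X)` if for every binary operation `*`
and all `x, y`, `(x * y) • (y * x) = (x • y) * (y • x)`. -/
def ZBin {X : Type*} (bullet : X → X → X) : Prop :=
  ∀ star : X → X → X, ∀ x y : X,
    bullet (star x y) (star y x) = star (bullet x y) (bullet y x)

/-- If `• ∈ ZBin(X)` and `x ≠ y`, then the restriction of `•` to `{x, y}` is either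
a left-zero-semigroup or a right-zero-semigroup. -/
theorem ZBin.pair_leftZero_or_rightZero {X : Type*} (bullet : X → X → X)
    (h : ZBin bullet) : ∀ x y : X, x ≠ y →
      (bullet x y = x ∧ bullet y x = y) ∨ (bullet x y = y ∧ bullet y x = x) := by
  classical
  intro x y hxy
  have h1 := h (fun _ v => if v = y then x else y) x y
  have h2 := h (fun _ v => if v = x then y else x) x y
  simp only [if_pos rfl, if_neg hxy, if_neg (Ne.symm hxy)] at h1 h2
  by_cases hb : bullet y x = y
  · rw [if_pos hb] at h1
    exact Or.inl ⟨h1, hb⟩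
  · rw [if_neg hb] at h1
    by_cases hbx : bullet y x = x
    · rw [if_pos hbx] at h2
      exact Or.inr ⟨h1, hbx⟩
    · rw [if_neg hbx] at h2
      exact absurd (h1.symm.trans h2) (Ne.symm hxy)
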